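/- In the Farey group Γ with word metric with respect to {a,b,c}, the sphere Γ_n = {γ ∈ Γ : ‖γ‖ = n} satisfies |Γ_0| = 1 and |Γ_n| = 3·2^{n−1} for every integer n ≥ 1. -/

import Mathlib

open scoped MatrixGroups OnePoint
open Matrix MeasureTheory Filter Topology

noncomputable section

namespace Farey

/-- Möbius action of a real 2×2 matrix on `ℝ ∪ {∞}`. -/
def mobAux (M : Matrix (Fin 2) (Fin 2) ℝ) : OnePoint ℝ → OnePoint ℝ :=
  OnePoint.rec (if M 1 0 = 0 then ∞ else ((M 0 0 / M 1 0 : ℝ) : OnePoint ℝ))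
    (fun r => if M 1 0 * r + M 1 1 = 0 then ∞
      else (((M 0 0 * r + M 0 1) / (M 1 0 * r + M 1 1) : ℝ) : OnePoint ℝ))

@[simp] lemma mobAux_infty (M : Matrix (Fin 2) (Fin 2) ℝ) :
    mobAux M ∞ = if M 1 0 = 0 then ∞ else ((M 0 0 / M 1 0 : ℝ) : OnePoint ℝ) := rfl

@[simp] lemma mobAux_coe (M : Matrix (Fin 2) (Fin 2) ℝ) (r : ℝ) :
    mobAux M (r : OnePoint ℝ) = if M 1 0 * r + M 1 1 = 0 then ∞
      else (((M 0 0 * r + M 0 1) / (M 1 0 * r + M 1 1) : ℝ) : OnePoint ℝ) := rfl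

lemma mobAux_neg (M : Matrix (Fin 2) (Fin 2) ℝ) : mobAux (-M) = mobAux M := by
  funext x
  induction x using OnePoint.rec with
  | infty => simp [Matrix.neg_apply, neg_eq_zero, neg_div_neg_eq]
  | coe r =>
      rw [mobAux_coe, mobAux_coe]
      have h1 : (-M) 1 0 * r + (-M) 1 1 = -(M 1 0 * r + M 1 1) := by
        simp [Matrix.neg_apply]; ring
      have h0 : (-M) 0 0 * r + (-M) 0 1 = -(M 0 0 * r + M 0 1) := by
        simp [Matrix.neg_apply]; ring
      rw [h1, h0]
      simp only [neg_eq_zero, neg_div_neg_eq]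

end Farey

namespace Farey

/-- Möbius action of an integral 2×2 special linear matrix on `ℝ ∪ {∞}`. -/
def mobSL (g : SL(2, ℤ)) : OnePoint ℝ → OnePoint ℝ :=
  mobAux ((g : Matrix (Fin 2) (Fin 2) ℤ).map (Int.cast : ℤ → ℝ))

lemma mobSL_mul_center (g z : SL(2, ℤ)) (hz : z ∈ Subgroup.center SL(2, ℤ)) :
    mobSL (g * z) = mobSL g := by
  obtain ⟨r, hr, hscalar⟩ := Matrix.SpecialLinearGroup.mem_center_iff.mp hz
  have hr' : r = 1 ∨ r = -1 := by
    have : IsUnit r := IsUnit.of_mul_eq_one (a := r) (r ^ 1) (by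
      simpa [pow_succ, Fintype.card_fin] using hr)
    exact Int.isUnit_iff.mp this
  rcases hr' with h1 | h1
  · have : z = 1 := by
      ext i j
      have := congrFun (congrFun hscalar i) j
      simp [h1] at this
      simp [← this]
    simp [this]
  · have hzmat : (z : Matrix (Fin 2) (Fin 2) ℤ) = -1 := by
      ext i j
      have := congrFun (congrFun hscalar i) j
      simp [h1] at this
      simp [← this]
    unfold mobSL
    have : ((g * z : SL(2,ℤ)) : Matrix (Fin 2) (Fin 2) ℤ) = -(g : Matrix (Fin 2) (Fin 2) ℤ) := by
      rw [Matrix.SpecialLinearGroup.coe_mul, hzmat]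
      simp
    rw [this]
    have hmap : ((-(g : Matrix (Fin 2) (Fin 2) ℤ)).map (Int.cast : ℤ → ℝ))
        = -(((g : Matrix (Fin 2) (Fin 2) ℤ)).map (Int.cast : ℤ → ℝ)) := by
      ext i j
      simp
    rw [hmap, mobAux_neg]

/-- Möbius action of an element of `PSL(2,ℤ)` on `ℝ ∪ {∞}`. -/
def mob (x : PSL(2, ℤ)) : OnePoint ℝ → OnePoint ℝ :=
  Quotient.liftOn' x mobSL (by
    intro g h hgh
    have hmem : g⁻¹ * h ∈ Subgroup.center SL(2, ℤ) := QuotientGroup.leftRel_apply.mp hgh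
    have : h = g * (g⁻¹ * h) := by group
    rw [this, mobSL_mul_center g _ hmem])

end Farey

namespace Farey

/-- The matrix `A = [[1,-2],[1,-1]]` as an element of `SL(2,ℤ)`. -/
def A : SL(2, ℤ) := ⟨!![1, -2; 1, -1], by norm_num [Matrix.det_fin_two_of]⟩

/-- The matrix `B = [[0,-1],[1,0]]` as an element of `SL(2,ℤ)`. -/
def B : SL(2, ℤ) := ⟨!![0, -1; 1, 0], by norm_num [Matrix.det_fin_two_of]⟩

/-- The matrix `C = [[1,-1],[2,-1]]` as an element of `SL(2,ℤ)`. -/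
def C : SL(2, ℤ) := ⟨!![1, -1; 2, -1], by norm_num [Matrix.det_fin_two_of]⟩

/-- The element `a ∈ PSL(2,ℤ)`. -/
def a : PSL(2, ℤ) := QuotientGroup.mk A

/-- The element `b ∈ PSL(2,ℤ)`. -/
def b : PSL(2, ℤ) := QuotientGroup.mk B

/-- The element `c ∈ PSL(2,ℤ)`. -/
def c : PSL(2, ℤ) := QuotientGroup.mk C

/-- The Farey group: the subgroup of `PSL(2,ℤ)` generated by `a`, `b`, `c`. -/
def fareyGroup : Subgroup PSL(2, ℤ) := Subgroup.closure {a, b, c}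

/-- The word length of an element of `PSL(2,ℤ)` with respect to the generators
`a`, `b`, `c` of the Farey group. -/
def wordLength (x : PSL(2, ℤ)) : ℕ :=
  sInf {n | ∃ l : List PSL(2, ℤ), l.length = n ∧ (∀ s ∈ l, s = a ∨ s = b ∨ s = c) ∧ l.prod = x}

/-- The sphere of radius `n` in the Farey group for the word metric w.r.t. `{a,b,c}`. -/
def sphere (n : ℕ) : Set PSL(2, ℤ) := {x | x ∈ fareyGroup ∧ wordLength x = n}

end Farey

namespace Farey

/-- The mediant of two rationals, `p₁/q₁ ⊕ p₂/q₂ = (p₁+p₂)/(q₁+q₂)` (in lowest terms). -/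
def mediant (p q : ℚ) : ℚ := ((p.num + q.num : ℤ) : ℚ) / (((p.den : ℤ) + (q.den : ℤ) : ℤ) : ℚ)

/-- Insert the mediant between every two consecutive entries of a list of rationals. -/
def insertMediants : List ℚ → List ℚ
  | p :: q :: rest => p :: mediant p q :: insertMediants (q :: rest)
  | l => l

/-- The Farey sequences: `F_0 = (0,1)`, and `F_{n+1}` is obtained from `F_n` by inserting
mediants between consecutive terms. -/
def fareySeq : ℕ → List ℚ
  | 0 => [0, 1]
  | n + 1 => insertMediants (fareySeq n)

/-- `p, q` are consecutive terms of the Farey sequence `F_n`. -/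
def IsFareyPairIn (n : ℕ) (p q : ℚ) : Prop :=
  ∃ i : ℕ, (fareySeq n)[i]? = some p ∧ (fareySeq n)[i + 1]? = some q

/-- `p, q` form a Farey pair: they are consecutive terms of some Farey sequence. -/
def IsFareyPair (p q : ℚ) : Prop := ∃ n : ℕ, IsFareyPairIn n p q

/-- The `k`-th summand (`k = 0, 1, 2, …`) in the series defining Minkowski's question mark
function: `(−1)^k 2^{−(a₁+⋯+a_{k+1})}` when the continued fraction expansion
`x = [a₀; a₁, a₂, …]` has at least `k+1` partial denominators and `0` otherwise. -/
def qmTerm (x : ℝ) (k : ℕ) : ℝ :=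
  match (List.range (k + 1)).mapM (fun i => (GenContFract.of x).partDens.get? i) with
  | none => 0
  | some l => (-1 : ℝ) ^ k * (2 : ℝ) ^ (-(l.sum))

/-- Minkowski's question mark function on `[0,1]`:
`?(x) = 2 ∑_{k≥1} (−1)^{k+1} 2^{−(a₁+⋯+a_k)}` for `x = [0; a₁, a₂, …]`, `?(1) = 1`. -/
def questionMark (x : ℝ) : ℝ := if x = 1 then 1 else 2 * ∑' k : ℕ, qmTerm x k

/-- The extended Minkowski function `M̄(q) = (1/3)(∑_{k=−∞}^{m−1} 2^{−|k|} + ?(q−m)·2^{−|m|})`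
for `q ∈ [m, m+1]`. -/
def extM (q : ℝ) : ℝ :=
  (1 / 3) * ((∑' j : ℕ, (2 : ℝ) ^ (-|⌊q⌋ - 1 - (j : ℤ)|)) +
    questionMark (q - ⌊q⌋) * (2 : ℝ) ^ (-|⌊q⌋|))

instance : MeasurableSpace (OnePoint ℝ) := borel _
instance : BorelSpace (OnePoint ℝ) := ⟨rfl⟩

/-- `μ` is the extended Minkowski measure: the Borel probability measure on `ℝ ∪ {∞}` giving
no mass to `{∞}` whose cumulative distribution function is the extended Minkowski function. -/
def IsExtMinkowskiMeasure (μ : Measure (OnePoint ℝ)) : Prop :=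
  IsProbabilityMeasure μ ∧ μ {∞} = 0 ∧
    ∀ u v : ℝ, u ≤ v →
      μ ((fun r : ℝ => (r : OnePoint ℝ)) '' Set.Ico u v) = ENNReal.ofReal (extM v - extM u)

end Farey

open Farey

namespace FP
inductive L | la | lb | lc
deriving DecidableEq, Repr
instance : Fintype L := ⟨{L.la, L.lb, L.lc}, fun x => by cases x <;> simp⟩
open L
def toMat : L → SL(2,ℤ)
  | la => Farey.A
  | lb => Farey.B
  | lc => Farey.C
noncomputable def en (M : SL(2,ℤ)) (i j : Fin 2) : ℝ := ((M : Matrix (Fin 2) (Fin 2) ℤ) i j : ℝ)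
noncomputable def den (M : SL(2,ℤ)) (x : ℝ) : ℝ := en M 1 0 * x + en M 1 1
noncomputable def act (M : SL(2,ℤ)) (x : ℝ) : ℝ := (en M 0 0 * x + en M 0 1) / den M x

def X : L → Set ℝ
  | la => Set.Ioi 1
  | lb => Set.Iio 0
  | lc => Set.Ioo 0 1

lemma den_la (x : ℝ) : den (toMat la) x = x - 1 := by simp [den, en, toMat, Farey.A, Farey.B, Farey.C]; ring
lemma act_la (x : ℝ) : act (toMat la) x = (x - 2)/(x - 1) := by simp [act, den, en, toMat, Farey.A, Farey.B, Farey.C]; ring_nf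
lemma den_lb (x : ℝ) : den (toMat lb) x = x := by simp [den, en, toMat, Farey.A, Farey.B, Farey.C]
lemma act_lb (x : ℝ) : act (toMat lb) x = -1/x := by simp [act, den, en, toMat, Farey.A, Farey.B, Farey.C]
lemma den_lc (x : ℝ) : den (toMat lc) x = 2*x - 1 := by simp [den, en, toMat, Farey.A, Farey.B, Farey.C]; ring
lemma act_lc (x : ℝ) : act (toMat lc) x = (x - 1)/(2*x - 1) := by
  simp [act, den, en, toMat, Farey.A, Farey.B, Farey.C]; ring_nf

lemma step (ℓ j : L) (h : j ≠ ℓ) (x : ℝ) (hx : x ∈ X j) :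
    den (toMat ℓ) x ≠ 0 ∧ act (toMat ℓ) x ∈ X ℓ := by
  cases ℓ
  · -- la: need x < 1
    have hx1 : x < 1 := by
      cases j with
      | la => exact absurd rfl h
      | lb => exact lt_trans hx one_pos
      | lc => exact hx.2
    rw [den_la, act_la]
    refine ⟨by intro h0; nlinarith, ?_⟩
    rw [X, Set.mem_Ioi, lt_div_iff_of_neg (by linarith)]
    linarith
  · -- lb : need x > 0
    have hx1 : 0 < x := by
      cases j with
      | la => exact lt_trans one_pos hx
      | lb => exact absurd rfl h
      | lc => exact hx.1
    rw [den_lb, act_lb]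
    exact ⟨ne_of_gt hx1, by rw [X, Set.mem_Iio]; exact div_neg_of_neg_of_pos (by norm_num) hx1⟩
  · -- lc : x > 1 or x < 0
    rw [den_lc, act_lc, X, Set.mem_Ioo]
    cases j with
    | lc => exact absurd rfl h
    | la =>
      have hx1 : 1 < x := hx
      refine ⟨by intro h0; nlinarith, div_pos (by linarith) (by linarith), ?_⟩
      rw [div_lt_one (by linarith)]; linarith
    | lb =>
      have hx1 : x < 0 := hx
      refine ⟨by intro h0; nlinarith, div_pos_of_neg_of_neg (by linarith) (by linarith), ?_⟩
      rw [div_lt_one_of_neg (by linarith)]; linarith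
lemma en_mul (M N : SL(2,ℤ)) (i j : Fin 2) :
    en (M * N) i j = en M i 0 * en N 0 j + en M i 1 * en N 1 j := by
  simp only [en, Matrix.SpecialLinearGroup.coe_mul, Matrix.mul_apply, Fin.sum_univ_two]
  push_cast; ring

lemma den_mul (M N : SL(2,ℤ)) (x : ℝ) (hN : den N x ≠ 0) :
    den (M * N) x = den M (act N x) * den N x := by
  have hN' : en N 1 0 * x + en N 1 1 ≠ 0 := hN
  simp only [den, act, en_mul]
  field_simp
  ring

lemma act_mul (M N : SL(2,ℤ)) (x : ℝ) (hN : den N x ≠ 0) (hM : den M (act N x) ≠ 0) :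
    act (M * N) x = act M (act N x) := by
  have hN' : en N 1 0 * x + en N 1 1 ≠ 0 := hN
  have hM' : en M 1 0 * ((en N 0 0 * x + en N 0 1) / (en N 1 0 * x + en N 1 1)) + en M 1 1 ≠ 0 := hM
  have hd : den (M * N) x ≠ 0 := by rw [den_mul M N x hN]; exact mul_ne_zero hM hN
  have hd' : en (M * N) 1 0 * x + en (M * N) 1 1 ≠ 0 := hd
  simp only [act, den]
  rw [div_eq_div_iff hd' hM']
  simp only [en_mul]
  field_simp
  ring


noncomputable def prodM (l : List L) : SL(2,ℤ) := (l.map toMat).prod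

lemma pingpong : ∀ (t : List L) (ℓ : L), (ℓ :: t).Chain' (· ≠ ·) →
    ∀ j x, (∀ m ∈ (ℓ :: t).getLast?, j ≠ m) → x ∈ X j →
    den (prodM (ℓ :: t)) x ≠ 0 ∧ act (prodM (ℓ :: t)) x ∈ X ℓ := by
  intro t
  induction t with
  | nil =>
      intro ℓ _ j x hj hx
      have hjl : j ≠ ℓ := hj ℓ (by simp)
      have := step ℓ j hjl x hx
      simpa [prodM] using this
  | cons ℓ' t ih =>
      intro ℓ hc j x hj hx
      obtain ⟨h12, hc'⟩ := List.isChain_cons_cons.mp hc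
      have hj' : ∀ m ∈ (ℓ' :: t).getLast?, j ≠ m := by
        intro m hm; exact hj m (by rw [List.getLast?_cons_cons]; exact hm)
      obtain ⟨hden, hmem⟩ := ih ℓ' hc' j x hj' hx
      obtain ⟨hden2, hmem2⟩ := step ℓ ℓ' (Ne.symm h12) _ hmem
      have hp : prodM (ℓ :: ℓ' :: t) = toMat ℓ * prodM (ℓ' :: t) := by simp [prodM]
      rw [hp, den_mul _ _ _ hden, act_mul _ _ _ hden hden2]
      exact ⟨mul_ne_zero hden2 hden, hmem2⟩

lemma X_disj {j k : L} (h : j ≠ k) {x : ℝ} (hj : x ∈ X j) (hk : x ∈ X k) : False := by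
  cases j <;> cases k <;> simp_all [X, Set.mem_Ioi, Set.mem_Iio, Set.mem_Ioo] <;> linarith

lemma act_center (M : SL(2,ℤ)) (hM : M ∈ Subgroup.center SL(2,ℤ)) (x : ℝ) :
    den M x ≠ 0 ∧ act M x = x := by
  obtain ⟨r, hr, hsc⟩ := Matrix.SpecialLinearGroup.mem_center_iff.mp hM
  have hr' : r = 1 ∨ r = -1 := by
    have : IsUnit r := IsUnit.of_mul_eq_one (a := r) (r ^ 1) (by
      simpa [pow_succ, Fintype.card_fin] using hr)
    exact Int.isUnit_iff.mp this
  have h10 : en M 1 0 = 0 := by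
    rw [en, ← hsc, Matrix.scalar_apply, Matrix.diagonal_apply_ne _ (by decide)]; simp
  have h01 : en M 0 1 = 0 := by
    rw [en, ← hsc, Matrix.scalar_apply, Matrix.diagonal_apply_ne _ (by decide)]; simp
  have h11 : en M 1 1 = (r : ℝ) := by
    rw [en, ← hsc, Matrix.scalar_apply, Matrix.diagonal_apply_eq]
  have h00 : en M 0 0 = (r : ℝ) := by
    rw [en, ← hsc, Matrix.scalar_apply, Matrix.diagonal_apply_eq]
  have hrne : (r : ℝ) ≠ 0 := by rcases hr' with h | h <;> simp [h]
  constructor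
  · rw [den, h10, h11]; simpa using hrne
  · rw [act, den, h10, h01, h11, h00]
    field_simp
    simp only [mul_zero, add_zero, zero_add]; exact mul_div_cancel_left₀ x hrne

lemma mk_prodM_ne_one (l : List L) (hne : l ≠ []) (hc : l.Chain' (· ≠ ·)) :
    (QuotientGroup.mk (prodM l) : PSL(2,ℤ)) ≠ 1 := by
  intro h
  have hcen : prodM l ∈ Subgroup.center SL(2,ℤ) := (QuotientGroup.eq_one_iff _).mp h
  obtain ⟨ℓ, t, rfl⟩ := List.exists_cons_of_ne_nil hne
  -- choose j different from head and last
  obtain ⟨g, hg⟩ : ∃ g, (ℓ :: t).getLast? = some g := by cases h' : (ℓ :: t).getLast? with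
    | none => simp at h'
    | some g => exact ⟨g, rfl⟩
  obtain ⟨j, hj1, hj2⟩ : ∃ j : L, j ≠ ℓ ∧ j ≠ g := by
    cases ℓ <;> cases g <;> decide
  obtain ⟨x, hx⟩ : ∃ x, x ∈ X j := by
    cases j
    · exact ⟨2, by norm_num [X]⟩
    · exact ⟨-1, by norm_num [X]⟩
    · exact ⟨1/2, by norm_num [X]⟩
  have hpp := pingpong t ℓ hc j x (by intro m hm; rw [hg] at hm; simp at hm; exact hm ▸ hj2) hx
  have hcx := act_center _ hcen x
  exact X_disj hj1 hx (by rw [← hcx.2]; exact hpp.2)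

def toPSL : L → PSL(2,ℤ) := fun ℓ => QuotientGroup.mk (toMat ℓ)

noncomputable def prodP (l : List L) : PSL(2,ℤ) := (l.map toPSL).prod

lemma prodP_nil : prodP [] = 1 := rfl

lemma prodP_cons (ℓ : L) (t : List L) : prodP (ℓ :: t) = toPSL ℓ * prodP t := by
  simp [prodP]

lemma prodP_append (l l' : List L) : prodP (l ++ l') = prodP l * prodP l' := by
  simp [prodP]

lemma prodP_eq (l : List L) : prodP l = QuotientGroup.mk (prodM l) := by
  induction l with
  | nil => simp [prodP, prodM]
  | cons x t ih =>
      rw [prodP_cons, ih]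
      have : prodM (x :: t) = toMat x * prodM t := by simp [prodM]
      rw [this]
      rfl

lemma prodP_ne_one (l : List L) (hne : l ≠ []) (hc : l.Chain' (· ≠ ·)) : prodP l ≠ 1 := by
  rw [prodP_eq]; exact mk_prodM_ne_one l hne hc

lemma toMat_sq (ℓ : L) : toMat ℓ * toMat ℓ ∈ Subgroup.center SL(2,ℤ) := by
  apply Matrix.SpecialLinearGroup.mem_center_iff.mpr
  refine ⟨-1, by norm_num, ?_⟩
  have : ((toMat ℓ * toMat ℓ : SL(2,ℤ)) : Matrix (Fin 2) (Fin 2) ℤ)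
      = (toMat ℓ : Matrix (Fin 2) (Fin 2) ℤ) * (toMat ℓ : Matrix (Fin 2) (Fin 2) ℤ) := rfl
  rw [this]
  cases ℓ <;>
    · ext i j
      fin_cases i <;> fin_cases j <;>
        simp [toMat, Farey.A, Farey.B, Farey.C, Matrix.mul_apply, Fin.sum_univ_two,
          Matrix.scalar_apply, Matrix.diagonal_apply]

lemma toPSL_sq (ℓ : L) : toPSL ℓ * toPSL ℓ = 1 := by
  show (QuotientGroup.mk (toMat ℓ) * QuotientGroup.mk (toMat ℓ) : PSL(2,ℤ)) = 1
  rw [← QuotientGroup.mk_mul, QuotientGroup.eq_one_iff]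
  exact toMat_sq ℓ

lemma toPSL_inv (ℓ : L) : (toPSL ℓ)⁻¹ = toPSL ℓ := inv_eq_of_mul_eq_one_left (toPSL_sq ℓ)

lemma prodP_reverse (l : List L) : prodP l.reverse = (prodP l)⁻¹ := by
  induction l with
  | nil => simp [prodP]
  | cons x t ih =>
      rw [List.reverse_cons, prodP_append, ih, prodP_cons]
      simp [prodP, toPSL_inv, _root_.mul_inv_rev]

lemma cancel : ∀ l : List L, ¬ l.Chain' (· ≠ ·) →
    ∃ l' : List L, prodP l' = prodP l ∧ l'.length + 2 = l.length := by
  intro l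
  induction l with
  | nil => intro h; exact absurd List.isChain_nil h
  | cons x t ih =>
      intro h
      cases t with
      | nil => exact absurd (List.isChain_singleton x) h
      | cons y t' =>
          by_cases hxy : x = y
          · refine ⟨t', ?_, by simp⟩
            subst hxy
            rw [prodP_cons, prodP_cons, ← mul_assoc, toPSL_sq, one_mul]
          · have h2 : ¬ (y :: t').Chain' (· ≠ ·) := by
              intro h2; exact h (List.isChain_cons_cons.mpr ⟨hxy, h2⟩)
            obtain ⟨l'', h1, hlen⟩ := ih h2
            exact ⟨x :: l'', by rw [prodP_cons, prodP_cons, h1], by simp [← hlen]⟩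

lemma reduce_aux : ∀ n (l : List L), l.length ≤ n →
    ∃ l', l'.Chain' (· ≠ ·) ∧ prodP l' = prodP l ∧ l'.length ≤ l.length := by
  intro n
  induction n with
  | zero =>
      intro l hl
      have : l = [] := List.length_eq_zero_iff.mp (Nat.le_zero.mp hl)
      exact ⟨l, by rw [this]; exact List.isChain_nil, rfl, le_rfl⟩
  | succ n ihn =>
      intro l hl
      by_cases h : l.Chain' (· ≠ ·)
      · exact ⟨l, h, rfl, le_rfl⟩
      · obtain ⟨l'', h1, hlen⟩ := cancel l h
        obtain ⟨l', hc', hp', hl'⟩ := ihn l'' (by omega)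
        exact ⟨l', hc', hp'.trans h1, by omega⟩

lemma reduce (l : List L) : ∃ l', l'.Chain' (· ≠ ·) ∧ prodP l' = prodP l ∧
    l'.length ≤ l.length := reduce_aux l.length l le_rfl

lemma inj : ∀ l l' : List L, l.Chain' (· ≠ ·) → l'.Chain' (· ≠ ·) →
    prodP l = prodP l' → l = l' := by
  intro l
  induction l with
  | nil =>
      intro l' _ hc' hp
      cases l' with
      | nil => rfl
      | cons y t' => exact absurd hp.symm (prodP_ne_one _ (by simp) hc')
  | cons x t ih =>
      intro l' hc hc' hp
      cases l' with
      | nil => exact absurd hp (prodP_ne_one _ (by simp) hc)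
      | cons y t' =>
          by_cases hxy : x = y
          · subst hxy
            have ht : prodP t = prodP t' := by
              have := hp
              rw [prodP_cons, prodP_cons] at this
              exact mul_left_cancel this
            have := ih t' (List.isChain_cons.mp hc).2 (List.isChain_cons.mp hc').2 ht
            rw [this]
          · exfalso
            set w := (x :: t).reverse ++ (y :: t') with hw
            have hw1 : prodP w = 1 := by
              rw [hw, prodP_append, prodP_reverse, hp, inv_mul_cancel]
            have hwc : w.Chain' (· ≠ ·) := by
              apply List.isChain_append.mpr
              refine ⟨List.isChain_reverse.mpr (hc.imp fun a b h => Ne.symm h), hc', ?_⟩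
              intro p hp' q hq
              rw [List.getLast?_reverse] at hp'
              simp only [List.head?_cons, Option.mem_def, Option.some_inj] at hp' hq
              subst hp'; subst hq; exact hxy
            have hwne : w ≠ [] := by simp [hw]
            exact prodP_ne_one w hwne hwc hw1

lemma toPSL_la : toPSL L.la = Farey.a := rfl
lemma toPSL_lb : toPSL L.lb = Farey.b := rfl
lemma toPSL_lc : toPSL L.lc = Farey.c := rfl

lemma toPSL_abc (ℓ : L) : toPSL ℓ = Farey.a ∨ toPSL ℓ = Farey.b ∨ toPSL ℓ = Farey.c := by
  cases ℓ
  · exact Or.inl rfl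
  · exact Or.inr (Or.inl rfl)
  · exact Or.inr (Or.inr rfl)

lemma exists_letterlist (lst : List (PSL(2,ℤ)))
    (h : ∀ s ∈ lst, s = Farey.a ∨ s = Farey.b ∨ s = Farey.c) :
    ∃ m : List L, m.map toPSL = lst := by
  induction lst with
  | nil => exact ⟨[], rfl⟩
  | cons s t ih =>
      obtain ⟨m, hm⟩ := ih (fun s hs => h s (by simp [hs]))
      rcases h s (by simp) with hs | hs | hs
      · exact ⟨L.la :: m, by simp [hm, toPSL_la, hs]⟩
      · exact ⟨L.lb :: m, by simp [hm, toPSL_lb, hs]⟩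
      · exact ⟨L.lc :: m, by simp [hm, toPSL_lc, hs]⟩

lemma wordLength_prodP (l : List L) (hc : l.Chain' (· ≠ ·)) :
    Farey.wordLength (prodP l) = l.length := by
  have hub : l.length ∈ {n | ∃ lst : List (PSL(2,ℤ)), lst.length = n ∧
      (∀ s ∈ lst, s = Farey.a ∨ s = Farey.b ∨ s = Farey.c) ∧ lst.prod = prodP l} := by
    refine ⟨l.map toPSL, by simp, ?_, rfl⟩
    intro s hs
    simp only [List.mem_map] at hs
    obtain ⟨ℓ, -, rfl⟩ := hs
    exact toPSL_abc ℓ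
  have h1 : Farey.wordLength (prodP l) ≤ l.length := Nat.sInf_le hub
  have hne : {n | ∃ lst : List (PSL(2,ℤ)), lst.length = n ∧
      (∀ s ∈ lst, s = Farey.a ∨ s = Farey.b ∨ s = Farey.c) ∧ lst.prod = prodP l}.Nonempty :=
    ⟨_, hub⟩
  obtain ⟨lst, hlen, hlet, hprod⟩ := Nat.sInf_mem hne
  obtain ⟨m, rfl⟩ := exists_letterlist lst hlet
  obtain ⟨m', hm'c, hm'p, hm'len⟩ := reduce m
  have hmm : prodP m = prodP l := hprod
  have heq : m' = l := inj m' l hm'c hc (hm'p.trans hmm)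
  have h2 : Farey.wordLength (prodP l) = (m.map toPSL).length := hlen.symm
  rw [List.length_map] at h2
  have h3 : m'.length = l.length := by rw [heq]
  omega

lemma prodP_mem (l : List L) : prodP l ∈ Farey.fareyGroup := by
  apply list_prod_mem
  intro s hs
  simp only [List.mem_map] at hs
  obtain ⟨ℓ, -, rfl⟩ := hs
  apply Subgroup.subset_closure
  rcases toPSL_abc ℓ with h | h | h <;> simp [h]

lemma mem_farey_exists {x : PSL(2,ℤ)} (hx : x ∈ Farey.fareyGroup) :
    ∃ m : List L, m.Chain' (· ≠ ·) ∧ prodP m = x := by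
  have key : ∃ m : List L, prodP m = x := by
    refine Subgroup.closure_induction (p := fun g _ => ∃ m : List L, prodP m = g)
      ?_ ⟨[], rfl⟩ ?_ ?_ hx
    · intro y hy
      rcases hy with h | h | h
      · exact ⟨[L.la], by simp [prodP, h, toPSL_la]⟩
      · exact ⟨[L.lb], by simp [prodP, h, toPSL_lb]⟩
      · exact ⟨[L.lc], by simp only [Set.mem_singleton_iff] at h; simp [prodP, h, toPSL_lc]⟩
    · rintro g g' _ _ ⟨m1, rfl⟩ ⟨m2, rfl⟩
      exact ⟨m1 ++ m2, prodP_append m1 m2⟩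
    · rintro g _ ⟨m, rfl⟩
      exact ⟨m.reverse, prodP_reverse m⟩
  obtain ⟨m, hm⟩ := key
  obtain ⟨m', hc', hp', -⟩ := reduce m
  exact ⟨m', hc', hp'.trans hm⟩

lemma sphere_eq (n : ℕ) :
    Farey.sphere n = prodP '' {l : List L | l.Chain' (· ≠ ·) ∧ l.length = n} := by
  ext x
  constructor
  · rintro ⟨hxg, hwl⟩
    obtain ⟨m, hmc, hmp⟩ := mem_farey_exists hxg
    refine ⟨m, ⟨hmc, ?_⟩, hmp⟩
    rw [← hwl, ← hmp, wordLength_prodP m hmc]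
  · rintro ⟨l, ⟨hc, hlen⟩, rfl⟩
    exact ⟨prodP_mem l, by rw [wordLength_prodP l hc, hlen]⟩

def R : ℕ → Finset (List L)
  | 0 => {[]}
  | n+1 => (R n).biUnion (fun t =>
      (Finset.univ.filter (fun ℓ : L => ∀ h ∈ t.head?, ℓ ≠ h)).image (fun ℓ => ℓ :: t))

lemma mem_R : ∀ n (l : List L), l ∈ R n ↔ l.Chain' (· ≠ ·) ∧ l.length = n := by
  intro n
  induction n with
  | zero =>
      intro l
      simp only [R, Finset.mem_singleton]
      constructor
      · rintro rfl; exact ⟨List.isChain_nil, rfl⟩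
      · rintro ⟨-, hl⟩; exact List.length_eq_zero_iff.mp hl
  | succ n ih =>
      intro l
      simp only [R, Finset.mem_biUnion, Finset.mem_image, Finset.mem_filter, Finset.mem_univ,
        true_and]
      constructor
      · rintro ⟨t, ht, ℓ, hℓ, rfl⟩
        obtain ⟨htc, htl⟩ := (ih t).mp ht
        exact ⟨List.isChain_cons.mpr ⟨hℓ, htc⟩, by simp [htl]⟩
      · rintro ⟨hc, hlen⟩
        cases l with
        | nil => simp at hlen
        | cons ℓ t =>
            obtain ⟨h1, h2⟩ := List.isChain_cons.mp hc
            exact ⟨t, (ih t).mpr ⟨h2, by simpa using hlen⟩, ℓ, h1, rfl⟩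

lemma card_filter_ne (h : L) :
    (Finset.univ.filter (fun ℓ : L => ∀ m ∈ (some h : Option L), ℓ ≠ m)).card = 2 := by
  cases h <;> decide

lemma card_R_succ (n : ℕ) (hn : 1 ≤ n) : (R (n+1)).card = 2 * (R n).card := by
  have hdisj : ∀ t ∈ R n, ∀ t' ∈ R n, t ≠ t' →
      Disjoint ((Finset.univ.filter (fun ℓ : L => ∀ h ∈ t.head?, ℓ ≠ h)).image (fun ℓ => ℓ :: t))
        ((Finset.univ.filter (fun ℓ : L => ∀ h ∈ t'.head?, ℓ ≠ h)).image (fun ℓ => ℓ :: t')) := by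
    intro t ht t' ht' hne
    rw [Finset.disjoint_left]
    rintro x hx hx'
    simp only [Finset.mem_image, Finset.mem_filter] at hx hx'
    obtain ⟨ℓ, -, rfl⟩ := hx
    obtain ⟨ℓ', -, h⟩ := hx'
    injection h with h1 h2
    exact hne h2.symm
  have hcard : ∀ t ∈ R n,
      ((Finset.univ.filter (fun ℓ : L => ∀ h ∈ t.head?, ℓ ≠ h)).image (fun ℓ => ℓ :: t)).card
        = 2 := by
    intro t ht
    obtain ⟨htc, htl⟩ := (mem_R n t).mp ht
    cases t with
    | nil => simp at htl; omega
    | cons h t' =>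
        rw [Finset.card_image_of_injective _ (fun x y hxy => by injection hxy)]
        exact card_filter_ne h
  show ((R n).biUnion _).card = _
  rw [Finset.card_biUnion hdisj, Finset.sum_congr rfl hcard, Finset.sum_const, smul_eq_mul,
    mul_comm]

lemma card_R (n : ℕ) (hn : 1 ≤ n) : (R n).card = 3 * 2 ^ (n - 1) := by
  induction n with
  | zero => omega
  | succ n ih =>
      rcases Nat.eq_or_lt_of_le hn with h | h
      · have : n = 0 := by omega
        subst this
        decide
      · have hn1 : 1 ≤ n := by omega
        rw [card_R_succ n hn1, ih hn1]
        have h2 : n - 1 + 1 = n := by omega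
        rw [Nat.succ_sub_one]
        conv_rhs => rw [← h2]
        rw [pow_succ]
        ring

lemma sphere_ncard (n : ℕ) : (Farey.sphere n).ncard = (R n).card := by
  rw [sphere_eq]
  have hset : {l : List L | l.Chain' (· ≠ ·) ∧ l.length = n} = ↑(R n) := by
    ext l; simp [mem_R]
  rw [hset, Set.ncard_image_of_injOn, Set.ncard_coe_finset]
  intro l hl l' hl' h
  rw [Finset.mem_coe, mem_R] at hl hl'
  exact inj l l' hl.1 hl'.1 h

end FP

/-- **Lemma (sphere counts).** In the Farey group with the word metric w.r.t. `{a,b,c}`,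
the sphere `Γ_n = {γ ∈ Γ : ‖γ‖ = n}` satisfies `|Γ_0| = 1` and `|Γ_n| = 3·2^{n−1}` for
`n ≥ 1`. -/
theorem sphere_card :
    (sphere 0).ncard = 1 ∧ ∀ n : ℕ, 1 ≤ n → (sphere n).ncard = 3 * 2 ^ (n - 1) := by
  constructor
  · rw [FP.sphere_ncard]; decide
  · intro n hn
    rw [FP.sphere_ncard, FP.card_R n hn]
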